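/- Let n ≥ 2. Define Log₁ : Δ° → (Fin n → ℝ) by Log₁(λ) i = (1/n) * ln(λ i) − (1/n²) * ∑ j, ln(λ j), and Exp₁ : H → (Fin n → ℝ) by Exp₁(ξ) i = exp(n * ξ i) / ∑ j, exp(n * ξ j), where H = {ξ : Fin n → ℝ | ∑ i, ξ i = 0}. Then: (i) Log₁(λ) ∈ H for every λ ∈ Δ°; (ii) Log₁(λ ⊕ μ) = Log₁(λ) + Log₁(μ) and Log₁(c ⊙ λ) = c • Log₁(λ) for all λ, μ ∈ Δ° and c ∈ ℝ; (iii) Exp₁(ξ) ∈ Δ° for every ξ ∈ H; (iv) Log₁(Exp₁(ξ)) = ξ for all ξ ∈ H and Exp₁(Log₁(λ)) = λ for all λ ∈ Δ°, so Log₁ is a bijection from Δ° onto H with inverse Exp₁. -/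
import Mathlib


open Real Finset

/-- The open probability simplex. -/
def simplex' (n : ℕ) : Set (Fin n → ℝ) :=
  {l | (∀ i, 0 < l i) ∧ ∑ i, l i = 1}

/-- The perturbation operation on the open simplex. -/
noncomputable def pert (n : ℕ) (l m : Fin n → ℝ) : Fin n → ℝ :=
  fun i => l i * m i / ∑ j, l j * m j

/-- The powering operation on the open simplex (real powers via `Real.rpow`). -/
noncomputable def spow (n : ℕ) (c : ℝ) (l : Fin n → ℝ) : Fin n → ℝ :=
  fun i => l i ^ c / ∑ j, l j ^ c

/-- The quotient logarithm map `Log₁` (centered log-ratio up to the factor `n`). -/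
noncomputable def Log1 (n : ℕ) (l : Fin n → ℝ) : Fin n → ℝ :=
  fun i => (1 / (n : ℝ)) * Real.log (l i) - (1 / (n : ℝ) ^ 2) * ∑ j, Real.log (l j)

/-- The quotient exponential map `Exp₁` (softmax). -/
noncomputable def Exp1 (n : ℕ) (ξ : Fin n → ℝ) : Fin n → ℝ :=
  fun i => Real.exp ((n : ℝ) * ξ i) / ∑ j, Real.exp ((n : ℝ) * ξ j)

/-- `Log₁` is a linear bijection from `(Δ°, ⊕, ⊙)` onto the
hyperplane `H = {ξ | ∑ i, ξ i = 0}` with inverse `Exp₁`. -/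
theorem stmt5 (n : ℕ) (hn : 2 ≤ n) :
    (∀ l, l ∈ simplex' n → ∑ i, Log1 n l i = 0) ∧
    (∀ l m, l ∈ simplex' n → m ∈ simplex' n →
      Log1 n (pert n l m) = Log1 n l + Log1 n m) ∧
    (∀ l, l ∈ simplex' n → ∀ c : ℝ, Log1 n (spow n c l) = c • Log1 n l) ∧
    (∀ ξ : Fin n → ℝ, ∑ i, ξ i = 0 → Exp1 n ξ ∈ simplex' n) ∧
    (∀ ξ : Fin n → ℝ, ∑ i, ξ i = 0 → Log1 n (Exp1 n ξ) = ξ) ∧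
    (∀ l, l ∈ simplex' n → Exp1 n (Log1 n l) = l) := by
  have hn0 : (n : ℝ) ≠ 0 := by
    have h : 0 < n := by omega
    exact_mod_cast h.ne'
  have hne : (Finset.univ : Finset (Fin n)).Nonempty := ⟨⟨0, by omega⟩, Finset.mem_univ _⟩
  refine ⟨?_, ?_, ?_, ?_, ?_, ?_⟩
  · intro l hl
    simp only [Log1]
    rw [Finset.sum_sub_distrib, ← Finset.mul_sum, Finset.sum_const, Finset.card_univ,
      Fintype.card_fin, nsmul_eq_mul]
    field_simp
    ring
  · intro l m hl hm
    have hS : 0 < ∑ j, l j * m j :=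
      Finset.sum_pos (fun j _ => mul_pos (hl.1 j) (hm.1 j)) hne
    funext i
    have key : ∀ j, Real.log (pert n l m j)
        = Real.log (l j) + Real.log (m j) - Real.log (∑ k, l k * m k) := fun j => by
      simp only [pert]
      rw [Real.log_div (mul_pos (hl.1 j) (hm.1 j)).ne' hS.ne',
        Real.log_mul (hl.1 j).ne' (hm.1 j).ne']
    simp only [Log1, key, Pi.add_apply]
    rw [Finset.sum_sub_distrib, Finset.sum_add_distrib, Finset.sum_const, Finset.card_univ,
      Fintype.card_fin, nsmul_eq_mul]
    field_simp
    ring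
  · intro l hl c
    have hS : 0 < ∑ j, l j ^ c :=
      Finset.sum_pos (fun j _ => Real.rpow_pos_of_pos (hl.1 j) c) hne
    funext i
    have key : ∀ j, Real.log (spow n c l j)
        = c * Real.log (l j) - Real.log (∑ k, l k ^ c) := fun j => by
      simp only [spow]
      rw [Real.log_div (Real.rpow_pos_of_pos (hl.1 j) c).ne' hS.ne',
        Real.log_rpow (hl.1 j)]
    simp only [Log1, key, Pi.smul_apply, smul_eq_mul]
    rw [Finset.sum_sub_distrib, ← Finset.mul_sum, Finset.sum_const, Finset.card_univ,
      Fintype.card_fin, nsmul_eq_mul]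
    field_simp
    ring
  · intro ξ hξ
    have hS : 0 < ∑ j, Real.exp ((n : ℝ) * ξ j) :=
      Finset.sum_pos (fun j _ => Real.exp_pos _) hne
    refine ⟨fun i => div_pos (Real.exp_pos _) hS, ?_⟩
    simp only [Exp1]
    rw [← Finset.sum_div, div_self hS.ne']
  · intro ξ hξ
    have hS : 0 < ∑ j, Real.exp ((n : ℝ) * ξ j) :=
      Finset.sum_pos (fun j _ => Real.exp_pos _) hne
    funext i
    have key : ∀ j, Real.log (Exp1 n ξ j)
        = (n : ℝ) * ξ j - Real.log (∑ k, Real.exp ((n : ℝ) * ξ k)) := fun j => by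
      simp only [Exp1]
      rw [Real.log_div (Real.exp_pos _).ne' hS.ne', Real.log_exp]
    simp only [Log1, key]
    rw [Finset.sum_sub_distrib, ← Finset.mul_sum, hξ, Finset.sum_const, Finset.card_univ,
      Fintype.card_fin, nsmul_eq_mul]
    field_simp
    ring
  · intro l hl
    funext i
    have h3 : ∀ j, Real.exp ((n : ℝ) * Log1 n l j)
        = l j * Real.exp (-((1 / (n : ℝ)) * ∑ k, Real.log (l k))) := fun j => by
      have h : (n : ℝ) * Log1 n l j
          = Real.log (l j) + -((1 / (n : ℝ)) * ∑ k, Real.log (l k)) := by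
        simp only [Log1]
        field_simp
        ring
      rw [h, Real.exp_add, Real.exp_log (hl.1 j)]
    simp only [Exp1, h3, ← Finset.sum_mul, hl.2, one_mul, mul_div_assoc,
      div_self (Real.exp_ne_zero _), mul_one]
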